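/- arXiv:1304.2619 — 2 statements merged into one kernel-verified Lean document; each statement's English description precedes it below -/
import Mathlib

section
/- Let s > 1/2 and a, b, c ∈ H^s_+(𝕋). Then, as operators on L²_+(𝕋), H_{Π(a b̄ c)} = T_{a b̄} H_c + H_a T_{b c̄} − H_a H_b H_c. -/
open scoped BigOperators ComplexConjugate

noncomputable section

/-- The Hardy space `L²₊(𝕋)` of the circle, modeled by the Hilbert space `ℓ²(ℕ, ℂ)` of
sequences of nonnegative Fourier (= Taylor) coefficients. -/
abbrev Hardy : Type := lp (fun _ : ℕ => ℂ) 2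

/-- The Fourier coefficients of an element of the Hardy space. -/
def coeffs (f : Hardy) : ℕ → ℂ := fun n => f n

/-- Membership in the Sobolev space `Hˢ₊(𝕋)`, expressed on Fourier coefficients. -/
def InHs (s : ℝ) (u : ℕ → ℂ) : Prop :=
  Summable fun k : ℕ => ((1 : ℝ) + (k : ℝ) ^ 2) ^ s * ‖u k‖ ^ 2

/-- The `Hˢ` norm, expressed on Fourier coefficients. -/
def hsNorm (s : ℝ) (u : ℕ → ℂ) : ℝ :=
  Real.sqrt (∑' k : ℕ, ((1 : ℝ) + (k : ℝ) ^ 2) ^ s * ‖u k‖ ^ 2)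

/-- Membership in the Wiener algebra `W`. -/
def InW (u : ℕ → ℂ) : Prop := Summable fun k : ℕ => ‖u k‖

/-- The Wiener norm `‖u‖_W = Σ |û(k)|`. -/
def wienerNorm (u : ℕ → ℂ) : ℝ := ∑' k : ℕ, ‖u k‖

/-- The `L²` norm, expressed on Fourier coefficients. -/
def l2Norm (u : ℕ → ℂ) : ℝ := Real.sqrt (∑' k : ℕ, ‖u k‖ ^ 2)

/-- The Hankel operator `H_u(h) = Π(u h̄)`, expressed on Fourier coefficients:
`(H_u h)^(n) = Σ_p û(n+p) conj(ĥ(p))`. -/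
def hankel (u h : ℕ → ℂ) : ℕ → ℂ := fun n => ∑' p : ℕ, u (n + p) * conj (h p)

/-- The shifted Hankel operator `K_u = S* H_u`. -/
def shiftedHankel (u h : ℕ → ℂ) : ℕ → ℂ := fun n => hankel u h (n + 1)

/-- Fourier coefficients of the pointwise product `fg` of two holomorphic (Hardy class)
functions: the Cauchy product. -/
def mulCoeff (f g : ℕ → ℂ) : ℕ → ℂ := fun n => ∑ p ∈ Finset.range (n + 1), f p * g (n - p)

/-- Fourier coefficients of `T_{a b̄}(h) = Π(a b̄ h)` for `a, b, h` in the Hardy class. -/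
def toeplitzAB (a b h : ℕ → ℂ) : ℕ → ℂ :=
  fun n => ∑' q : ℕ, conj (b q) * mulCoeff a h (n + q)

/-- Fourier coefficients of `T_{ā}(h) = Π(ā h)` for `a, h` in the Hardy class. -/
def toeplitzConj (a h : ℕ → ℂ) : ℕ → ℂ := fun n => ∑' q : ℕ, conj (a q) * h (n + q)

/-- The Szegő nonlinearity `Π(|u|²u) = T_{u ū}(u)`. -/
def szegoNL (u : ℕ → ℂ) : ℕ → ℂ := toeplitzAB u u u

/-- The operator `B_u = (i/2) H_u² - i T_{|u|²}` of the Lax pair. -/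
def laxB (u h : ℕ → ℂ) : ℕ → ℂ := fun n =>
  Complex.I / 2 * hankel u (hankel u h) n - Complex.I * toeplitzAB u u h n

/-- The operator `C_u = (i/2) K_u² - i T_{|u|²}` of the Lax pair. -/
def laxC (u h : ℕ → ℂ) : ℕ → ℂ := fun n =>
  Complex.I / 2 * shiftedHankel u (shiftedHankel u h) n - Complex.I * toeplitzAB u u h n

/-- `u : ℝ → L²₊` is a (smooth in time, `Hˢ`-valued) solution of the cubic Szegő equation
`i ∂_t u = Π(|u|²u)`. -/
def IsSzegoSolution (s : ℝ) (u : ℝ → Hardy) : Prop :=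
  (∀ t, InHs s (coeffs (u t))) ∧ ContDiff ℝ (⊤ : ℕ∞) u ∧
    ∀ t n, HasDerivAt (fun τ : ℝ => coeffs (u τ) n) (-Complex.I * szegoNL (coeffs (u t)) n) t

/-- The Hankel operator with symbol `u` (composed with complex conjugation, which does not
change its range), as a linear map on finitely supported sequences. -/
def hankelLM (u : ℕ → ℂ) : (ℕ →₀ ℂ) →ₗ[ℂ] (ℕ → ℂ) :=
  Finsupp.lsum ℂ fun p => LinearMap.toSpanSingleton ℂ (ℕ → ℂ) fun n => u (n + p)

/-- The rank of the Hankel operator `H_u`. -/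
def hankelRank (u : ℕ → ℂ) : ℕ := Module.finrank ℂ (LinearMap.range (hankelLM u))

/-- The finite rank manifold `𝒱(d)`: `u` with `rk H_u = [(d+1)/2]` and `rk K_u = [d/2]`
(recall `K_u = H_{S*u}`). -/
def InV (d : ℕ) (u : ℕ → ℂ) : Prop :=
  InHs (1 / 2) u ∧ FiniteDimensional ℂ (LinearMap.range (hankelLM u)) ∧
    hankelRank u = (d + 1) / 2 ∧ hankelRank (fun n => u (n + 1)) = d / 2

/-- `w = w^y = (I + y H_u²)⁻¹(1)`, characterized by `(I + y H_u²) w = 1`. -/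
def IsResolventOne (y : ℝ) (u w : ℕ → ℂ) : Prop :=
  Memℓp w 2 ∧ ∀ n, w n + (y : ℂ) * hankel u (hankel u w) n = if n = 0 then 1 else 0

/-- The Hamiltonian vector field `X_{J^y}(u) = 2iy w^y H_u(w^y)` (a pointwise product of two
Hardy class functions), expressed on Fourier coefficients; `w` stands for `w^y`. -/
def XJ (y : ℝ) (u w : ℕ → ℂ) : ℕ → ℂ :=
  fun n => 2 * Complex.I * (y : ℂ) * mulCoeff w (hankel u w) n

/-- The operator `G_u^y(h) = -y w^y Π(conj(w^y) h) + y² (H_u w^y) Π(conj(H_u w^y) h)`;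
`w` stands for `w^y`. -/
def Gop (y : ℝ) (u w h : ℕ → ℂ) : ℕ → ℂ := fun n =>
  -(y : ℂ) * mulCoeff w (toeplitzConj w h) n
    + (y : ℂ) ^ 2 * mulCoeff (hankel u w) (toeplitzConj (hankel u w) h) n

/-- The operator `F_u^y(h) = G_u^y(h) - y² (h | H_u w^y) H_u w^y`; `w` stands for `w^y`. -/
def Fop (y : ℝ) (u w h : ℕ → ℂ) : ℕ → ℂ := fun n =>
  Gop y u w h n - (y : ℂ) ^ 2 * (∑' p : ℕ, h p * conj (hankel u w p)) * hankel u w n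


open scoped ENNReal

/-! ### Auxiliary material for `statement3` -/

open Function in
private lemma st3_summable_iff_bij {β γ : Type*} {f : β → ℂ} {g : γ → ℂ}
    (i : support g → β) (hi : Function.Injective i)
    (hf : support f ⊆ Set.range i) (hfg : ∀ x, f (i x) = g x) :
    Summable f ↔ Summable g :=
  exists_congr fun _ => hasSum_iff_hasSum_of_ne_zero_bij i hi hf hfg

/-- `u ∈ Hˢ`, `s > 1/2`, implies `u ∈ ℓ¹`. -/
private lemma st3_summable_norm {s : ℝ} (hs : 1 / 2 < s) {u : ℕ → ℂ} (hu : InHs s u) :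
    Summable fun k : ℕ => ‖u k‖ := by
  have hspos : (0 : ℝ) < s := by linarith
  have hbase : Summable fun k : ℕ => (((k : ℝ)) ^ (2 * s))⁻¹ :=
    Real.summable_nat_rpow_inv.mpr (by linarith)
  have hpoly : Summable fun k : ℕ => ((1 : ℝ) + (k : ℝ) ^ 2) ^ (-s) := by
    rw [← summable_nat_add_iff 1]
    have hshift : Summable fun k : ℕ => ((((k + 1 : ℕ) : ℝ)) ^ (2 * s))⁻¹ :=
      (summable_nat_add_iff 1).mpr hbase
    refine hshift.of_nonneg_of_le (fun k => Real.rpow_nonneg (by positivity) _) (fun k => ?_)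
    have hx : (0 : ℝ) < ((k + 1 : ℕ) : ℝ) := by positivity
    have h1 : (((k + 1 : ℕ) : ℝ)) ^ (2 * s) = ((((k + 1 : ℕ) : ℝ)) ^ 2) ^ s := by
      rw [← Real.rpow_natCast (((k + 1 : ℕ) : ℝ)) 2, ← Real.rpow_mul hx.le]
      norm_num
    have h2 : ((((k + 1 : ℕ) : ℝ)) ^ 2) ^ s ≤ ((1 : ℝ) + ((k + 1 : ℕ) : ℝ) ^ 2) ^ s :=
      Real.rpow_le_rpow (by positivity) (by linarith [sq_nonneg (((k + 1 : ℕ) : ℝ))]) hspos.le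
    rw [Real.rpow_neg (by positivity)]
    rw [h1]
    exact inv_anti₀ (by positivity) h2
  refine Summable.of_nonneg_of_le (fun k => norm_nonneg _) (fun k => ?_)
    ((hpoly.add hu).div_const 2)
  set t : ℝ := 1 + (k : ℝ) ^ 2 with ht
  have ht0 : (0 : ℝ) < t := by positivity
  have e1 : t ^ (-(s / 2)) * t ^ (s / 2) = 1 := by
    rw [← Real.rpow_add ht0]; norm_num
  have e2 : (t ^ (-(s / 2))) ^ 2 = t ^ (-s) := by
    rw [← Real.rpow_natCast (t ^ (-(s / 2))) 2, ← Real.rpow_mul ht0.le]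
    norm_num
  have e3 : (t ^ (s / 2)) ^ 2 = t ^ s := by
    rw [← Real.rpow_natCast (t ^ (s / 2)) 2, ← Real.rpow_mul ht0.le]
    norm_num
  have h2 := two_mul_le_add_sq (t ^ (-(s / 2))) (t ^ (s / 2) * ‖u k‖)
  have lhs_eq : 2 * t ^ (-(s / 2)) * (t ^ (s / 2) * ‖u k‖) = 2 * ‖u k‖ := by
    calc 2 * t ^ (-(s / 2)) * (t ^ (s / 2) * ‖u k‖)
        = 2 * (t ^ (-(s / 2)) * t ^ (s / 2)) * ‖u k‖ := by ring
      _ = 2 * ‖u k‖ := by rw [e1]; ring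
  have rhs_eq : (t ^ (-(s / 2))) ^ 2 + (t ^ (s / 2) * ‖u k‖) ^ 2
      = t ^ (-s) + t ^ s * ‖u k‖ ^ 2 := by
    rw [mul_pow, e2, e3]
  rw [lhs_eq, rhs_eq] at h2
  linarith

private lemma st3_bounded {h : ℕ → ℂ} (hh : Memℓp h 2) :
    ∃ C : ℝ, 0 ≤ C ∧ ∀ p, ‖h p‖ ≤ C := by
  have h2 : Summable fun p : ℕ => ‖h p‖ ^ (2 : ℕ) := by
    have h0 := (memℓp_gen_iff (p := 2) (by norm_num)).mp hh
    have : ∀ p : ℕ, ‖h p‖ ^ ((2 : ℝ≥0∞).toReal) = ‖h p‖ ^ (2 : ℕ) := by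
      intro p
      rw [ENNReal.toReal_ofNat, ← Real.rpow_natCast (‖h p‖) 2]
      norm_num
    exact (summable_congr this).mp h0
  refine ⟨Real.sqrt (∑' p : ℕ, ‖h p‖ ^ (2 : ℕ)), Real.sqrt_nonneg _, fun p => ?_⟩
  have h1 : ‖h p‖ ^ (2 : ℕ) ≤ ∑' q : ℕ, ‖h q‖ ^ (2 : ℕ) :=
    Summable.le_tsum h2 p fun q _ => by positivity
  calc ‖h p‖ = Real.sqrt (‖h p‖ ^ (2 : ℕ)) := by
        rw [Real.sqrt_sq (norm_nonneg _)]
    _ ≤ _ := Real.sqrt_le_sqrt h1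

/-- The common kernel: coordinates `(i, k, p)`. -/
private def st3F (a b c h : ℕ → ℂ) (n : ℕ) : ℕ × ℕ × ℕ → ℂ := fun x =>
  if n + x.2.2 ≤ x.1 + x.2.1 then
    a x.1 * conj (b (x.1 + x.2.1 - (n + x.2.2))) * c x.2.1 * conj (h x.2.2)
  else 0

private def st3F1 (a b c h : ℕ → ℂ) (n : ℕ) : ℕ × ℕ × ℕ → ℂ := fun x =>
  if x.2.2 ≤ x.2.1 then st3F a b c h n x else 0

private def st3F2 (a b c h : ℕ → ℂ) (n : ℕ) : ℕ × ℕ × ℕ → ℂ := fun x =>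
  if n ≤ x.1 then st3F a b c h n x else 0

private def st3F3 (a b c h : ℕ → ℂ) (n : ℕ) : ℕ × ℕ × ℕ → ℂ := fun x =>
  if n ≤ x.1 ∧ x.2.2 ≤ x.2.1 then st3F a b c h n x else 0

/-- The majorant. -/
private def st3N (a b c h : ℕ → ℂ) (n : ℕ) : ℕ × ℕ × ℕ → ℝ := fun x =>
  if n + x.2.2 ≤ x.1 + x.2.1 then
    ‖a x.1‖ * ‖b (x.1 + x.2.1 - (n + x.2.2))‖ * ‖c x.2.1‖ * ‖h x.2.2‖
  else 0

private lemma st3F_apply (a b c h : ℕ → ℂ) (n i k p : ℕ) :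
    st3F a b c h n (i, k, p) =
      if n + p ≤ i + k then a i * conj (b (i + k - (n + p))) * c k * conj (h p) else 0 := rfl

private lemma st3N_apply (a b c h : ℕ → ℂ) (n i k p : ℕ) :
    st3N a b c h n (i, k, p) =
      if n + p ≤ i + k then ‖a i‖ * ‖b (i + k - (n + p))‖ * ‖c k‖ * ‖h p‖ else 0 := rfl

private lemma st3N_nonneg (a b c h : ℕ → ℂ) (n : ℕ) (x : ℕ × ℕ × ℕ) :
    0 ≤ st3N a b c h n x := by
  unfold st3N; split
  · positivity
  · exact le_rfl

private lemma st3_norm_F_le (a b c h : ℕ → ℂ) (n : ℕ) (x : ℕ × ℕ × ℕ) :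
    ‖st3F a b c h n x‖ ≤ st3N a b c h n x := by
  unfold st3F st3N; split
  · simp [norm_mul, RCLike.norm_conj]
  · simp

private lemma st3_norm_F1_le (a b c h : ℕ → ℂ) (n : ℕ) (x : ℕ × ℕ × ℕ) :
    ‖st3F1 a b c h n x‖ ≤ st3N a b c h n x := by
  unfold st3F1; split
  · exact st3_norm_F_le a b c h n x
  · simpa using st3N_nonneg a b c h n x

private lemma st3_norm_F2_le (a b c h : ℕ → ℂ) (n : ℕ) (x : ℕ × ℕ × ℕ) :
    ‖st3F2 a b c h n x‖ ≤ st3N a b c h n x := by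
  unfold st3F2; split
  · exact st3_norm_F_le a b c h n x
  · simpa using st3N_nonneg a b c h n x

private lemma st3_norm_F3_le (a b c h : ℕ → ℂ) (n : ℕ) (x : ℕ × ℕ × ℕ) :
    ‖st3F3 a b c h n x‖ ≤ st3N a b c h n x := by
  unfold st3F3; split
  · exact st3_norm_F_le a b c h n x
  · simpa using st3N_nonneg a b c h n x

private lemma st3_decomp (a b c h : ℕ → ℂ) (n : ℕ) (x : ℕ × ℕ × ℕ) :
    st3F a b c h n x = st3F1 a b c h n x + st3F2 a b c h n x - st3F3 a b c h n x := by
  obtain ⟨i, k, p⟩ := x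
  show st3F a b c h n (i, k, p) =
    (if p ≤ k then st3F a b c h n (i, k, p) else 0)
    + (if n ≤ i then st3F a b c h n (i, k, p) else 0)
    - (if n ≤ i ∧ p ≤ k then st3F a b c h n (i, k, p) else 0)
  by_cases h1 : p ≤ k <;> by_cases h2 : n ≤ i
  · rw [if_pos h1, if_pos h2, if_pos ⟨h2, h1⟩]; ring
  · rw [if_pos h1, if_neg h2, if_neg fun hc => h2 hc.1]; ring
  · rw [if_neg h1, if_pos h2, if_neg fun hc => h1 hc.2]; ring
  · rw [if_neg h1, if_neg h2, if_neg fun hc => h1 hc.2]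
    have h0 : st3F a b c h n (i, k, p) = 0 := by
      rw [st3F_apply]; exact if_neg (by omega)
    rw [h0]; ring

private lemma st3N_summable {a b c h : ℕ → ℂ} {n : ℕ} {C : ℝ}
    (Sa : Summable fun k => ‖a k‖) (Sb : Summable fun k => ‖b k‖)
    (Sc : Summable fun k => ‖c k‖) (hC0 : 0 ≤ C) (hC : ∀ p, ‖h p‖ ≤ C) :
    Summable (st3N a b c h n) := by
  set B := ∑' k : ℕ, ‖b k‖ with hBdef
  have hB0 : 0 ≤ B := tsum_nonneg fun k => norm_nonneg _
  have hN0 : (0 : ℕ × ℕ × ℕ → ℝ) ≤ st3N a b c h n := fun x => st3N_nonneg a b c h n x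
  -- fiberwise (in `p`) summability: finite support
  have hp : ∀ i k : ℕ, Summable fun p => st3N a b c h n (i, k, p) := by
    intro i k
    apply summable_of_ne_finset_zero (s := Finset.range (i + k + 1))
    intro p hp
    simp only [Finset.mem_range, not_lt] at hp
    show st3N a b c h n (i, k, p) = 0
    rw [st3N_apply]
    exact if_neg (by omega)
  -- bound for the `p`-sum
  have hpsum : ∀ i k : ℕ,
      (∑' p : ℕ, st3N a b c h n (i, k, p)) ≤ ‖a i‖ * ‖c k‖ * (C * B) := by
    intro i k
    rw [tsum_eq_sum (s := Finset.range (i + k + 1)) (f := fun p => st3N a b c h n (i, k, p))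
      (fun p hp => by
        simp only [Finset.mem_range, not_lt] at hp
        show st3N a b c h n (i, k, p) = 0
        rw [st3N_apply]
        exact if_neg (by omega))]
    by_cases hik : n ≤ i + k
    · set m := i + k - n with hm
      have step1 : ∑ p ∈ Finset.range (i + k + 1), st3N a b c h n (i, k, p)
          ≤ ∑ p ∈ Finset.range (i + k + 1),
              (if p ≤ m then ‖a i‖ * ‖c k‖ * C * ‖b (m - p)‖ else 0) := by
        refine Finset.sum_le_sum fun p _ => ?_
        rw [st3N_apply]
        by_cases hg : n + p ≤ i + k
        · rw [if_pos hg, if_pos (show p ≤ m by omega)]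
          have hidx : i + k - (n + p) = m - p := by omega
          rw [hidx]
          calc ‖a i‖ * ‖b (m - p)‖ * ‖c k‖ * ‖h p‖
              ≤ ‖a i‖ * ‖b (m - p)‖ * ‖c k‖ * C := by
                have := hC p
                gcongr
            _ = ‖a i‖ * ‖c k‖ * C * ‖b (m - p)‖ := by ring
        · rw [if_neg hg, if_neg (show ¬ p ≤ m by omega)]
      have step2 : ∑ p ∈ Finset.range (i + k + 1),
          (if p ≤ m then ‖a i‖ * ‖c k‖ * C * ‖b (m - p)‖ else 0)
          = ∑ p ∈ Finset.range (m + 1), ‖a i‖ * ‖c k‖ * C * ‖b (m - p)‖ := by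
        have hsub : Finset.range (m + 1) ⊆ Finset.range (i + k + 1) :=
          Finset.range_subset_range.mpr (by omega)
        rw [← Finset.sum_subset hsub (fun p _ hps =>
          if_neg (show ¬ p ≤ m by simp only [Finset.mem_range, not_lt] at hps; omega))]
        exact Finset.sum_congr rfl fun p hp =>
          if_pos (show p ≤ m by simp only [Finset.mem_range] at hp; omega)
      have step3 : ∑ p ∈ Finset.range (m + 1), ‖a i‖ * ‖c k‖ * C * ‖b (m - p)‖
          ≤ ‖a i‖ * ‖c k‖ * (C * B) := by
        rw [← Finset.mul_sum]
        have hrefl : ∑ p ∈ Finset.range (m + 1), ‖b (m - p)‖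
            = ∑ p ∈ Finset.range (m + 1), ‖b p‖ := by
          have := Finset.sum_range_reflect (fun j => ‖b j‖) (m + 1)
          simpa using this
        rw [hrefl]
        have hle : ∑ p ∈ Finset.range (m + 1), ‖b p‖ ≤ B :=
          Summable.sum_le_tsum _ (fun q _ => norm_nonneg _) Sb
        calc ‖a i‖ * ‖c k‖ * C * ∑ p ∈ Finset.range (m + 1), ‖b p‖
            ≤ ‖a i‖ * ‖c k‖ * C * B := by
              have : (0:ℝ) ≤ ‖a i‖ * ‖c k‖ * C := by positivity
              exact mul_le_mul_of_nonneg_left hle this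
          _ = ‖a i‖ * ‖c k‖ * (C * B) := by ring
      exact le_trans (le_trans step1 (le_of_eq step2)) step3
    · have hz : ∀ p ∈ Finset.range (i + k + 1), st3N a b c h n (i, k, p) = 0 := fun p _ => by
        rw [st3N_apply]; exact if_neg (by omega)
      rw [Finset.sum_eq_zero hz]
      positivity
  -- summability over `(k, p)` for fixed `i`
  have hkp : ∀ i : ℕ, Summable fun y : ℕ × ℕ => st3N a b c h n (i, y) := by
    intro i
    rw [summable_prod_of_nonneg (fun y => st3N_nonneg a b c h n (i, y))]
    refine ⟨fun k => hp i k, ?_⟩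
    refine Summable.of_nonneg_of_le (fun k => tsum_nonneg fun p => st3N_nonneg a b c h n _)
      (fun k => hpsum i k) ?_
    have : Summable fun k : ℕ => ‖a i‖ * ‖c k‖ := Sc.mul_left _
    exact this.mul_right _
  -- full summability
  rw [summable_prod_of_nonneg hN0]
  refine ⟨hkp, ?_⟩
  set K := (∑' k : ℕ, ‖c k‖) * (C * B) with hK
  have hK0 : 0 ≤ K := by
    have : (0:ℝ) ≤ ∑' k : ℕ, ‖c k‖ := tsum_nonneg fun k => norm_nonneg _
    positivity
  refine Summable.of_nonneg_of_le
    (fun i => tsum_nonneg fun y => st3N_nonneg a b c h n _) (fun i => ?_) (Sa.mul_right K)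
  rw [Summable.tsum_prod' (hkp i) (fun k => hp i k)]
  have hsum_k : Summable fun k : ℕ => ∑' p : ℕ, st3N a b c h n (i, k, p) := by
    have h1 := (summable_prod_of_nonneg (fun y => st3N_nonneg a b c h n (i, y))).mp (hkp i)
    exact h1.2
  calc ∑' k : ℕ, ∑' p : ℕ, st3N a b c h n (i, k, p)
      ≤ ∑' k : ℕ, ‖a i‖ * ‖c k‖ * (C * B) := by
        refine Summable.tsum_le_tsum (fun k => hpsum i k) hsum_k ?_
        exact ((Sc.mul_left _).mul_right _)
    _ = ‖a i‖ * K := by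
        rw [hK]
        calc ∑' k : ℕ, ‖a i‖ * ‖c k‖ * (C * B)
            = (∑' k : ℕ, ‖a i‖ * ‖c k‖) * (C * B) := tsum_mul_right
          _ = (‖a i‖ * ∑' k : ℕ, ‖c k‖) * (C * B) := by rw [tsum_mul_left]
          _ = ‖a i‖ * ((∑' k : ℕ, ‖c k‖) * (C * B)) := by ring

private lemma st3_E0 {a b c h : ℕ → ℂ} {n : ℕ} (hS : Summable (st3F a b c h n)) :
    hankel (toeplitzAB a b c) h n = ∑' x : ℕ × ℕ × ℕ, st3F a b c h n x := by
  classical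
  -- `G (p, q, j)`
  set G : ℕ × ℕ × ℕ → ℂ := fun x =>
    (if x.2.2 ≤ n + x.1 + x.2.1 then
      conj (b x.2.1) * (a x.2.2 * c (n + x.1 + x.2.1 - x.2.2)) else 0) * conj (h x.1)
    with hGdef
  have hmem : ∀ x : ℕ × ℕ × ℕ, x ∈ Function.support G → x.2.2 ≤ n + x.1 + x.2.1 := by
    intro x hx
    by_contra hcon
    exact hx (by rw [hGdef]; simp only [if_neg hcon, zero_mul])
  set iota : Function.support G → ℕ × ℕ × ℕ := fun x =>
    (x.1.2.2, n + x.1.1 + x.1.2.1 - x.1.2.2, x.1.1) with hiotadef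
  have hinj : Function.Injective iota := by
    rintro ⟨⟨p, q, j⟩, hx⟩ ⟨⟨p', q', j'⟩, hy⟩ hxy
    have h1 := hmem _ hx
    have h2 := hmem _ hy
    simp only at h1 h2
    simp only [hiotadef, Prod.mk.injEq] at hxy
    apply Subtype.ext
    simp only [Prod.mk.injEq]
    omega
  have hsupp : Function.support (st3F a b c h n) ⊆ Set.range iota := by
    rintro ⟨i, k, p⟩ hx
    have hguard : n + p ≤ i + k := by
      by_contra hcon
      exact hx (if_neg hcon)
    have hGval : G (p, i + k - (n + p), i) = st3F a b c h n (i, k, p) := by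
      show (if i ≤ n + p + (i + k - (n + p)) then
          conj (b (i + k - (n + p))) *
            (a i * c (n + p + (i + k - (n + p)) - i)) else 0) * conj (h p) = _
      rw [if_pos (by omega)]
      have e1 : n + p + (i + k - (n + p)) - i = k := by omega
      rw [e1]
      show _ = if n + p ≤ i + k then
        a i * conj (b (i + k - (n + p))) * c k * conj (h p) else 0
      rw [if_pos hguard]; ring
    refine ⟨⟨(p, i + k - (n + p), i), ?_⟩, ?_⟩
    · rw [Function.mem_support, hGval]
      exact hx
    · show ((p, i + k - (n + p), i).2.2, n + p + (i + k - (n + p)) - i, p) = (i, k, p)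
      have e1 : n + p + (i + k - (n + p)) - i = k := by omega
      simp [e1]
  have hfg : ∀ x : Function.support G, st3F a b c h n (iota x) = G x := by
    rintro ⟨⟨p, q, j⟩, hx⟩
    have hj := hmem _ hx
    simp only at hj
    show st3F a b c h n (j, n + p + q - j, p) = G (p, q, j)
    show (if n + p ≤ j + (n + p + q - j) then
      a j * conj (b (j + (n + p + q - j) - (n + p))) * c (n + p + q - j) * conj (h p)
      else 0) = _
    rw [if_pos (by omega)]
    have e : j + (n + p + q - j) - (n + p) = q := by omega
    rw [e]
    show _ = (if j ≤ n + p + q then conj (b q) * (a j * c (n + p + q - j)) else 0) * conj (h p)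
    rw [if_pos hj]; ring
  have hG : Summable G := (st3_summable_iff_bij iota hinj hsupp hfg).mp hS
  rw [tsum_eq_tsum_of_ne_zero_bij iota hinj hsupp hfg]
  -- evaluate `∑' G`
  rw [Summable.tsum_prod' hG hG.prod_factor]
  show hankel (toeplitzAB a b c) h n = _
  unfold hankel
  refine tsum_congr fun p => ?_
  rw [Summable.tsum_prod' (hG.prod_factor p) ((hG.prod_factor p).prod_factor)]
  have inner : ∀ q : ℕ, (∑' j : ℕ, G (p, q, j))
      = (conj (b q) * mulCoeff a c (n + p + q)) * conj (h p) := by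
    intro q
    simp only [hGdef]
    rw [tsum_mul_right]
    congr 1
    rw [tsum_eq_sum (s := Finset.range (n + p + q + 1))
      (f := fun j => if j ≤ n + p + q then conj (b q) * (a j * c (n + p + q - j)) else 0)
      (fun j hj => by
        simp only [Finset.mem_range, not_lt] at hj
        exact if_neg (by omega))]
    unfold mulCoeff
    rw [Finset.mul_sum]
    refine (Finset.sum_congr rfl fun j hj => ?_)
    simp only [Finset.mem_range] at hj
    rw [if_pos (by omega)]
  calc toeplitzAB a b c (n + p) * conj (h p)
      = (∑' q : ℕ, conj (b q) * mulCoeff a c (n + p + q)) * conj (h p) := rfl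
    _ = ∑' q : ℕ, (conj (b q) * mulCoeff a c (n + p + q)) * conj (h p) := by
        rw [tsum_mul_right]
    _ = ∑' q : ℕ, ∑' j : ℕ, G (p, q, j) := tsum_congr fun q => (inner q).symm

private lemma st3_E1 {a b c h : ℕ → ℂ} {n : ℕ} (hS : Summable (st3F1 a b c h n)) :
    toeplitzAB a b (hankel c h) n = ∑' x : ℕ × ℕ × ℕ, st3F1 a b c h n x := by
  classical
  -- `G (q, j, p)`
  set G : ℕ × ℕ × ℕ → ℂ := fun x =>
    (if x.2.1 ≤ n + x.1 then conj (b x.1) * a x.2.1 else 0)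
      * (c (n + x.1 - x.2.1 + x.2.2) * conj (h x.2.2)) with hGdef
  have hmem : ∀ x : ℕ × ℕ × ℕ, x ∈ Function.support G → x.2.1 ≤ n + x.1 := by
    intro x hx
    by_contra hcon
    exact hx (show G x = 0 by simp only [hGdef]; rw [if_neg hcon, zero_mul])
  set iota : Function.support G → ℕ × ℕ × ℕ := fun x =>
    (x.1.2.1, n + x.1.1 - x.1.2.1 + x.1.2.2, x.1.2.2) with hiotadef
  have hinj : Function.Injective iota := by
    rintro ⟨⟨q, j, p⟩, hx⟩ ⟨⟨q', j', p'⟩, hy⟩ hxy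
    have h1 := hmem _ hx
    have h2 := hmem _ hy
    simp only at h1 h2
    simp only [hiotadef, Prod.mk.injEq] at hxy
    apply Subtype.ext
    simp only [Prod.mk.injEq]
    omega
  have hsupp : Function.support (st3F1 a b c h n) ⊆ Set.range iota := by
    rintro ⟨i, k, p⟩ hx
    have hg1 : p ≤ k := by
      by_contra hcon
      exact hx (show st3F1 a b c h n (i, k, p) = 0 from if_neg (by simpa using hcon))
    have hg2 : n + p ≤ i + k := by
      by_contra hcon
      refine hx ?_
      show (if p ≤ k then st3F a b c h n (i, k, p) else 0) = 0
      rw [st3F_apply, if_neg hcon, ite_self]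
    have hGval : G (i + k - (n + p), i, p) = st3F1 a b c h n (i, k, p) := by
      show (if i ≤ n + (i + k - (n + p)) then conj (b (i + k - (n + p))) * a i else 0)
          * (c (n + (i + k - (n + p)) - i + p) * conj (h p)) = _
      rw [if_pos (by omega)]
      have e1 : n + (i + k - (n + p)) - i + p = k := by omega
      rw [e1]
      show _ = if p ≤ k then
          (if n + p ≤ i + k then
            a i * conj (b (i + k - (n + p))) * c k * conj (h p) else 0) else 0
      rw [if_pos hg1, if_pos hg2]; ring
    refine ⟨⟨(i + k - (n + p), i, p), ?_⟩, ?_⟩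
    · rw [Function.mem_support, hGval]
      exact hx
    · show (i, n + (i + k - (n + p)) - i + p, p) = (i, k, p)
      have e1 : n + (i + k - (n + p)) - i + p = k := by omega
      simp [e1]
  have hfg : ∀ x : Function.support G, st3F1 a b c h n (iota x) = G x := by
    rintro ⟨⟨q, j, p⟩, hx⟩
    have hj := hmem _ hx
    simp only at hj
    show st3F1 a b c h n (j, n + q - j + p, p) = G (q, j, p)
    show (if p ≤ n + q - j + p then
        (if n + p ≤ j + (n + q - j + p) then
          a j * conj (b (j + (n + q - j + p) - (n + p))) * c (n + q - j + p) * conj (h p)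
        else 0) else 0) = _
    rw [if_pos (by omega), if_pos (by omega)]
    have e : j + (n + q - j + p) - (n + p) = q := by omega
    rw [e]
    show _ = (if j ≤ n + q then conj (b q) * a j else 0) * (c (n + q - j + p) * conj (h p))
    rw [if_pos hj]; ring
  have hG : Summable G := (st3_summable_iff_bij iota hinj hsupp hfg).mp hS
  rw [tsum_eq_tsum_of_ne_zero_bij iota hinj hsupp hfg]
  rw [Summable.tsum_prod' hG hG.prod_factor]
  unfold toeplitzAB
  refine tsum_congr fun q => ?_
  rw [Summable.tsum_prod' (hG.prod_factor q) ((hG.prod_factor q).prod_factor)]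
  have inner : ∀ j : ℕ, (∑' p : ℕ, G (q, j, p))
      = (if j ≤ n + q then conj (b q) * a j else 0) * hankel c h (n + q - j) := by
    intro j
    simp only [hGdef]
    rw [tsum_mul_left]
    rfl
  calc conj (b q) * mulCoeff a (hankel c h) (n + q)
      = ∑ j ∈ Finset.range (n + q + 1),
          (if j ≤ n + q then conj (b q) * a j else 0) * hankel c h (n + q - j) := by
        unfold mulCoeff
        rw [Finset.mul_sum]
        refine Finset.sum_congr rfl fun j hj => ?_
        simp only [Finset.mem_range] at hj
        rw [if_pos (by omega)]
        ring
    _ = ∑' j : ℕ, (if j ≤ n + q then conj (b q) * a j else 0) * hankel c h (n + q - j) :=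
        (tsum_eq_sum (fun j hj => by
          simp only [Finset.mem_range, not_lt] at hj
          rw [if_neg (by omega), zero_mul])).symm
    _ = ∑' j : ℕ, ∑' p : ℕ, G (q, j, p) := tsum_congr fun j => (inner j).symm

private lemma st3_E2 {a b c h : ℕ → ℂ} {n : ℕ} (hS : Summable (st3F2 a b c h n)) :
    hankel a (toeplitzAB b c h) n = ∑' x : ℕ × ℕ × ℕ, st3F2 a b c h n x := by
  classical
  -- `G (p, q, j)`
  set G : ℕ × ℕ × ℕ → ℂ := fun x =>
    a (n + x.1) * (c x.2.1 *
      (if x.2.2 ≤ x.1 + x.2.1 then conj (b x.2.2) * conj (h (x.1 + x.2.1 - x.2.2)) else 0))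
    with hGdef
  have hmem : ∀ x : ℕ × ℕ × ℕ, x ∈ Function.support G → x.2.2 ≤ x.1 + x.2.1 := by
    intro x hx
    by_contra hcon
    exact hx (show G x = 0 by simp only [hGdef]; rw [if_neg hcon, mul_zero, mul_zero])
  set iota : Function.support G → ℕ × ℕ × ℕ := fun x =>
    (n + x.1.1, x.1.2.1, x.1.1 + x.1.2.1 - x.1.2.2) with hiotadef
  have hinj : Function.Injective iota := by
    rintro ⟨⟨p, q, j⟩, hx⟩ ⟨⟨p', q', j'⟩, hy⟩ hxy
    have h1 := hmem _ hx
    have h2 := hmem _ hy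
    simp only at h1 h2
    simp only [hiotadef, Prod.mk.injEq] at hxy
    apply Subtype.ext
    simp only [Prod.mk.injEq]
    omega
  have hsupp : Function.support (st3F2 a b c h n) ⊆ Set.range iota := by
    rintro ⟨i, k, p⟩ hx
    have hg1 : n ≤ i := by
      by_contra hcon
      exact hx (show st3F2 a b c h n (i, k, p) = 0 from if_neg (by simpa using hcon))
    have hg2 : n + p ≤ i + k := by
      by_contra hcon
      refine hx ?_
      show (if n ≤ i then st3F a b c h n (i, k, p) else 0) = 0
      rw [st3F_apply, if_neg hcon, ite_self]
    have hGval : G (i - n, k, i + k - (n + p)) = st3F2 a b c h n (i, k, p) := by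
      show a (n + (i - n)) * (c k *
          (if i + k - (n + p) ≤ i - n + k then
            conj (b (i + k - (n + p))) * conj (h (i - n + k - (i + k - (n + p)))) else 0)) = _
      rw [if_pos (by omega)]
      have e0 : n + (i - n) = i := by omega
      have e1 : i - n + k - (i + k - (n + p)) = p := by omega
      rw [e0, e1]
      show _ = if n ≤ i then
          (if n + p ≤ i + k then
            a i * conj (b (i + k - (n + p))) * c k * conj (h p) else 0) else 0
      rw [if_pos hg1, if_pos hg2]; ring
    refine ⟨⟨(i - n, k, i + k - (n + p)), ?_⟩, ?_⟩
    · rw [Function.mem_support, hGval]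
      exact hx
    · show (n + (i - n), k, i - n + k - (i + k - (n + p))) = (i, k, p)
      have e0 : n + (i - n) = i := by omega
      have e1 : i - n + k - (i + k - (n + p)) = p := by omega
      simp [e0, e1]
  have hfg : ∀ x : Function.support G, st3F2 a b c h n (iota x) = G x := by
    rintro ⟨⟨p, q, j⟩, hx⟩
    have hj := hmem _ hx
    simp only at hj
    show st3F2 a b c h n (n + p, q, p + q - j) = G (p, q, j)
    show (if n ≤ n + p then
        (if n + (p + q - j) ≤ n + p + q then
          a (n + p) * conj (b (n + p + q - (n + (p + q - j)))) * c q * conj (h (p + q - j))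
        else 0) else 0) = _
    rw [if_pos (by omega), if_pos (by omega)]
    have e : n + p + q - (n + (p + q - j)) = j := by omega
    rw [e]
    show _ = a (n + p) * (c q * (if j ≤ p + q then conj (b j) * conj (h (p + q - j)) else 0))
    rw [if_pos hj]; ring
  have hG : Summable G := (st3_summable_iff_bij iota hinj hsupp hfg).mp hS
  rw [tsum_eq_tsum_of_ne_zero_bij iota hinj hsupp hfg]
  rw [Summable.tsum_prod' hG hG.prod_factor]
  unfold hankel
  refine tsum_congr fun p => ?_
  rw [Summable.tsum_prod' (hG.prod_factor p) ((hG.prod_factor p).prod_factor)]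
  have hconj : conj (toeplitzAB b c h p) = ∑' q : ℕ, c q * conj (mulCoeff b h (p + q)) := by
    show conj (∑' q : ℕ, conj (c q) * mulCoeff b h (p + q)) = _
    simp only [starRingEnd_apply]
    rw [tsum_star]
    exact tsum_congr fun q => by rw [star_mul', star_star]
  rw [hconj, ← tsum_mul_left]
  refine tsum_congr fun q => ?_
  have hmc : conj (mulCoeff b h (p + q))
      = ∑' j : ℕ, (if j ≤ p + q then conj (b j) * conj (h (p + q - j)) else 0) := by
    rw [tsum_eq_sum (s := Finset.range (p + q + 1))
      (f := fun j => if j ≤ p + q then conj (b j) * conj (h (p + q - j)) else 0)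
      (fun j hj => by
        simp only [Finset.mem_range, not_lt] at hj
        exact if_neg (by omega))]
    unfold mulCoeff
    rw [map_sum]
    refine Finset.sum_congr rfl fun j hj => ?_
    simp only [Finset.mem_range] at hj
    rw [if_pos (by omega), map_mul]
  rw [hmc, ← tsum_mul_left, ← tsum_mul_left]

private lemma st3_E3 {a b c h : ℕ → ℂ} {n : ℕ} (hS : Summable (st3F3 a b c h n)) :
    hankel a (hankel b (hankel c h)) n = ∑' x : ℕ × ℕ × ℕ, st3F3 a b c h n x := by
  classical
  -- `G (p, q, r)`
  set G : ℕ × ℕ × ℕ → ℂ := fun x =>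
    a (n + x.1) * (conj (b (x.1 + x.2.1)) * (c (x.2.1 + x.2.2) * conj (h x.2.2)))
    with hGdef
  set iota : Function.support G → ℕ × ℕ × ℕ := fun x =>
    (n + x.1.1, x.1.2.1 + x.1.2.2, x.1.2.2) with hiotadef
  have hinj : Function.Injective iota := by
    rintro ⟨⟨p, q, r⟩, hx⟩ ⟨⟨p', q', r'⟩, hy⟩ hxy
    simp only [hiotadef, Prod.mk.injEq] at hxy
    apply Subtype.ext
    simp only [Prod.mk.injEq]
    omega
  have hsupp : Function.support (st3F3 a b c h n) ⊆ Set.range iota := by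
    rintro ⟨i, k, p⟩ hx
    have hg1 : n ≤ i ∧ p ≤ k := by
      by_contra hcon
      exact hx (show st3F3 a b c h n (i, k, p) = 0 from if_neg (by simpa using hcon))
    have hg2 : n + p ≤ i + k := by omega
    have hGval : G (i - n, k - p, p) = st3F3 a b c h n (i, k, p) := by
      show a (n + (i - n)) * (conj (b (i - n + (k - p))) * (c (k - p + p) * conj (h p))) = _
      have e0 : n + (i - n) = i := by omega
      have e1 : i - n + (k - p) = i + k - (n + p) := by omega
      have e2 : k - p + p = k := by omega
      rw [e0, e1, e2]
      show _ = if n ≤ i ∧ p ≤ k then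
          (if n + p ≤ i + k then
            a i * conj (b (i + k - (n + p))) * c k * conj (h p) else 0) else 0
      rw [if_pos hg1, if_pos hg2]; ring
    refine ⟨⟨(i - n, k - p, p), ?_⟩, ?_⟩
    · rw [Function.mem_support, hGval]
      exact hx
    · show (n + (i - n), k - p + p, p) = (i, k, p)
      have e0 : n + (i - n) = i := by omega
      have e2 : k - p + p = k := by omega
      simp [e0, e2]
  have hfg : ∀ x : Function.support G, st3F3 a b c h n (iota x) = G x := by
    rintro ⟨⟨p, q, r⟩, hx⟩
    show st3F3 a b c h n (n + p, q + r, r) = G (p, q, r)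
    show (if n ≤ n + p ∧ r ≤ q + r then
        (if n + r ≤ n + p + (q + r) then
          a (n + p) * conj (b (n + p + (q + r) - (n + r))) * c (q + r) * conj (h r)
        else 0) else 0) = _
    rw [if_pos ⟨by omega, by omega⟩, if_pos (by omega)]
    have e : n + p + (q + r) - (n + r) = p + q := by omega
    rw [e]
    show _ = a (n + p) * (conj (b (p + q)) * (c (q + r) * conj (h r)))
    ring
  have hG : Summable G := (st3_summable_iff_bij iota hinj hsupp hfg).mp hS
  rw [tsum_eq_tsum_of_ne_zero_bij iota hinj hsupp hfg]
  rw [Summable.tsum_prod' hG hG.prod_factor]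
  unfold hankel
  refine tsum_congr fun p => ?_
  rw [Summable.tsum_prod' (hG.prod_factor p) ((hG.prod_factor p).prod_factor)]
  have hconj : conj (∑' q : ℕ, b (p + q) * conj (∑' r : ℕ, c (q + r) * conj (h r)))
      = ∑' q : ℕ, conj (b (p + q)) * ∑' r : ℕ, c (q + r) * conj (h r) := by
    simp only [starRingEnd_apply]
    rw [tsum_star]
    exact tsum_congr fun q => by rw [star_mul', star_star]
  rw [hconj, ← tsum_mul_left]
  refine tsum_congr fun q => ?_
  rw [← tsum_mul_left, ← tsum_mul_left]


/-- **Lemma 2.1**: `H_{Π(a b̄ c)} = T_{a b̄} H_c + H_a T_{b c̄} - H_a H_b H_c`. -/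
theorem statement3 (s : ℝ) (hs : 1 / 2 < s) (a b c : ℕ → ℂ)
    (ha : InHs s a) (hb : InHs s b) (hc : InHs s c)
    (h : ℕ → ℂ) (hh : Memℓp h 2) (n : ℕ) :
    hankel (toeplitzAB a b c) h n
      = toeplitzAB a b (hankel c h) n + hankel a (toeplitzAB b c h) n
        - hankel a (hankel b (hankel c h)) n := by
  obtain ⟨C, hC0, hC⟩ := st3_bounded hh
  have Sa := st3_summable_norm hs ha
  have Sb := st3_summable_norm hs hb
  have Sc := st3_summable_norm hs hc
  have hN : Summable (st3N a b c h n) := st3N_summable Sa Sb Sc hC0 hC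
  have hSF : Summable (st3F a b c h n) :=
    Summable.of_norm_bounded hN (st3_norm_F_le a b c h n)
  have hS1 : Summable (st3F1 a b c h n) :=
    Summable.of_norm_bounded hN (st3_norm_F1_le a b c h n)
  have hS2 : Summable (st3F2 a b c h n) :=
    Summable.of_norm_bounded hN (st3_norm_F2_le a b c h n)
  have hS3 : Summable (st3F3 a b c h n) :=
    Summable.of_norm_bounded hN (st3_norm_F3_le a b c h n)
  calc hankel (toeplitzAB a b c) h n
      = ∑' x : ℕ × ℕ × ℕ, st3F a b c h n x := st3_E0 hSF
    _ = ∑' x : ℕ × ℕ × ℕ,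
          (st3F1 a b c h n x + st3F2 a b c h n x - st3F3 a b c h n x) :=
        tsum_congr (st3_decomp a b c h n)
    _ = (∑' x : ℕ × ℕ × ℕ, (st3F1 a b c h n x + st3F2 a b c h n x))
          - ∑' x : ℕ × ℕ × ℕ, st3F3 a b c h n x := Summable.tsum_sub (hS1.add hS2) hS3
    _ = (∑' x : ℕ × ℕ × ℕ, st3F1 a b c h n x) + (∑' x : ℕ × ℕ × ℕ, st3F2 a b c h n x)
          - ∑' x : ℕ × ℕ × ℕ, st3F3 a b c h n x := by
        rw [Summable.tsum_add hS1 hS2]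
    _ = toeplitzAB a b (hankel c h) n + hankel a (toeplitzAB b c h) n
          - hankel a (hankel b (hankel c h)) n := by
        rw [← st3_E1 hS1, ← st3_E2 hS2, ← st3_E3 hS3]


end
end

section
/- For every u ∈ H^{1/2}_+(𝕋), the operators H_u² and K_u² are related by K_u² = H_u² − (·|u)u, i.e. K_u²(h) = H_u²(h) − (h|u)u for every h ∈ L²_+(𝕋). -/
open scoped BigOperators ComplexConjugate

noncomputable section

/-- Auxiliary equivalence `Σ k, Fin (k+1) ≃ ℕ × ℕ`, `⟨k, i⟩ ↦ (i, k - i)`. -/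
def eAnti : (Σ k : ℕ, Fin (k + 1)) ≃ ℕ × ℕ where
  toFun x := (x.2.1, x.1 - x.2.1)
  invFun pq := ⟨pq.1 + pq.2, ⟨pq.1, by omega⟩⟩
  left_inv := fun ⟨k, i⟩ => by
    refine Sigma.ext (by simp; omega) ?_
    refine (Fin.heq_ext_iff (by simp; omega)).mpr rfl
  right_inv pq := by simp

/-- **Identity (1.3)**: `K_u² = H_u² - (·|u)u`. -/
theorem statement5 (u : ℕ → ℂ) (hu : InHs (1 / 2) u) (h : ℕ → ℂ) (hh : Memℓp h 2) (n : ℕ) :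
    shiftedHankel u (shiftedHankel u h) n
      = hankel u (hankel u h) n - (∑' p : ℕ, h p * conj (u p)) * u n := by
  classical
  have hu' : Summable fun k : ℕ => ((1 : ℝ) + (k : ℝ) ^ 2) ^ ((1:ℝ) / 2) * ‖u k‖ ^ 2 := hu
  have hrp : (2 : ENNReal).toReal = 2 := by norm_num
  have hpow : ∀ x : ℝ, x ^ ((2 : ENNReal).toReal) = x ^ 2 := fun x => by
    rw [hrp, show (2:ℝ) = ((2:ℕ):ℝ) by norm_num, Real.rpow_natCast]
  -- weighted summability : Σ (k+1)|u k|² < ∞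
  have hw : Summable fun k : ℕ => ((k : ℝ) + 1) * ‖u k‖ ^ 2 := by
    refine (hu'.mul_left (Real.sqrt 2)).of_nonneg_of_le (fun k => by positivity) (fun k => ?_)
    have hb : ((k : ℝ) + 1) ≤ Real.sqrt 2 * ((1 : ℝ) + (k : ℝ) ^ 2) ^ ((1:ℝ)/2) := by
      rw [← Real.sqrt_eq_rpow, ← Real.sqrt_mul (by norm_num : (0:ℝ) ≤ 2),
        show (2:ℝ) * (1 + (k:ℝ)^2) = 2 + 2*(k:ℝ)^2 by ring,
        Real.le_sqrt (by positivity)]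
      · nlinarith [sq_nonneg ((k:ℝ) - 1)]
      · positivity
    calc ((k:ℝ)+1) * ‖u k‖^2
        ≤ (Real.sqrt 2 * ((1:ℝ)+(k:ℝ)^2)^((1:ℝ)/2)) * ‖u k‖^2 :=
          mul_le_mul_of_nonneg_right hb (by positivity)
      _ = Real.sqrt 2 * (((1:ℝ)+(k:ℝ)^2)^((1:ℝ)/2) * ‖u k‖^2) := by ring
  have hu2 : Summable fun k : ℕ => ‖u k‖ ^ 2 := by
    refine hw.of_nonneg_of_le (fun k => by positivity) (fun k => ?_)
    nlinarith [mul_nonneg (Nat.cast_nonneg (α := ℝ) k) (sq_nonneg ‖u k‖)]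
  -- summability over the product
  have hP : Summable fun pq : ℕ × ℕ => ‖u (pq.1 + pq.2)‖ ^ 2 := by
    rw [← Equiv.summable_iff eAnti]
    have hsig : Summable fun x : Σ k : ℕ, Fin (k + 1) => ‖u x.1‖ ^ 2 := by
      refine (summable_sigma_of_nonneg (fun x => by positivity)).mpr
        ⟨fun k => Summable.of_finite, ?_⟩
      refine hw.congr fun k => ?_
      rw [tsum_fintype]
      show ((k:ℝ)+1) * ‖u k‖^2 = ∑ _b : Fin (k+1), ‖u k‖^2
      rw [Finset.sum_const, Finset.card_univ, Fintype.card_fin, nsmul_eq_mul]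
      push_cast
      ring
    refine hsig.congr fun x => ?_
    obtain ⟨k, i⟩ := x
    have : (i : ℕ) + (k - (i : ℕ)) = k := by omega
    simp only [eAnti, Equiv.coe_fn_mk, Function.comp_apply, this]
  have hSA : Summable fun p : ℕ => ∑' q : ℕ, ‖u (p + q)‖ ^ 2 :=
    ((summable_prod_of_nonneg (fun pq => by positivity)).mp hP).2
  have hA : ∀ p : ℕ, Summable fun q : ℕ => ‖u (p + q)‖ ^ 2 := fun p =>
    hu2.comp_injective (add_right_injective p)
  -- the lp elements
  have mu : ∀ p : ℕ, Memℓp (fun q => u (p + q)) 2 := fun p => by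
    apply memℓp_gen
    exact (hA p).congr fun q => (hpow _).symm
  let hH : Hardy := ⟨h, hh⟩
  let aH : ℕ → Hardy := fun p => ⟨fun q => u (p + q), mu p⟩
  have hnormsq : ∀ p : ℕ, ‖aH p‖ ^ 2 = ∑' q : ℕ, ‖u (p + q)‖ ^ 2 := fun p => by
    calc ‖aH p‖ ^ 2 = ‖aH p‖ ^ ((2 : ENNReal).toReal) := (hpow _).symm
      _ = ∑' q : ℕ, ‖(aH p : ∀ _ : ℕ, ℂ) q‖ ^ ((2 : ENNReal).toReal) :=
          lp.norm_rpow_eq_tsum (by rw [hrp]; norm_num) _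
      _ = ∑' q : ℕ, ‖u (p + q)‖ ^ 2 := tsum_congr fun q => hpow _
  have hbound : ∀ p : ℕ, ‖hankel u h p‖ ≤ ‖hH‖ * ‖aH p‖ := fun p => by
    have h1 : hankel u h p = inner (𝕜 := ℂ) hH (aH p) := by
      rw [lp.inner_eq_tsum]
      exact tsum_congr fun q => by
        rw [RCLike.inner_apply]
    rw [h1]
    exact norm_inner_le_norm _ _
  -- summability of the outer series
  have SB : Summable fun p : ℕ => u (n + p) * conj (hankel u h p) := by
    have hg : Summable fun p : ℕ => ‖hH‖ * ((‖u (n + p)‖ ^ 2 + ‖aH p‖ ^ 2) / 2) := by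
      refine Summable.mul_left _ (Summable.div_const ?_ 2)
      exact (hu2.comp_injective (add_right_injective n)).add
        (hSA.congr fun p => (hnormsq p).symm)
    refine Summable.of_norm_bounded hg fun p => ?_
    have h2 : ‖u (n + p) * conj (hankel u h p)‖ = ‖u (n + p)‖ * ‖hankel u h p‖ := by
      rw [norm_mul, RCLike.norm_conj]
    rw [h2]
    have h3 : ‖u (n + p)‖ * ‖hankel u h p‖ ≤ ‖u (n + p)‖ * (‖hH‖ * ‖aH p‖) :=
      mul_le_mul_of_nonneg_left (hbound p) (norm_nonneg _)
    refine h3.trans ?_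
    nlinarith [mul_nonneg (norm_nonneg hH) (sq_nonneg (‖u (n + p)‖ - ‖aH p‖)),
      norm_nonneg hH, norm_nonneg (aH p), norm_nonneg (u (n + p))]
  -- split off the first term
  have hzero := Summable.tsum_eq_zero_add SB
  have hL : shiftedHankel u (shiftedHankel u h) n
      = ∑' p : ℕ, u (n + (p + 1)) * conj (hankel u h (p + 1)) := by
    show (∑' p : ℕ, u (n + 1 + p) * conj (shiftedHankel u h p)) = _
    exact tsum_congr fun p => by rw [show n + 1 + p = n + (p + 1) from by omega]; rfl
  have hF0 : u (n + 0) * conj (hankel u h 0)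
      = (∑' p : ℕ, h p * conj (u p)) * u n := by
    have hc : conj (∑' q : ℕ, u (0 + q) * conj (h q)) = ∑' q : ℕ, h q * conj (u q) := by
      rw [starRingEnd_apply, tsum_star]
      exact tsum_congr fun q => by
        rw [← starRingEnd_apply, map_mul, Complex.conj_conj, zero_add]
        ring
    show u (n + 0) * conj (∑' q : ℕ, u (0 + q) * conj (h q)) = _
    rw [hc, add_zero]
    ring
  have hR : hankel u (hankel u h) n = ∑' p : ℕ, u (n + p) * conj (hankel u h p) := rfl
  rw [hL, hR, hzero, hF0]
  ring


end
end
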